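/- Let A ∈ GL(d, ℝ) and j ∈ {1, …, d−1} be such that χ_{j−1}(A) < χ_j(A) = χ_{j+1}(A) < χ_{j+2}(A) (with the conventions χ_0 = −∞, χ_{d+1} = +∞) and such that λ_j(A), λ_{j+1}(A) are a pair of non-real complex conjugate eigenvalues. Then there is δ > 0 such that every A' ∈ GL(d, ℝ) with ‖A − A'‖ < δ admits no dominated splitting of index j; i.e., there is no A'-invariant splitting ℝ^d = E ⊕ F with dim E = j such that ‖A'^k v‖/‖v‖ ≤ (1/2)·‖A'^k w‖/‖w‖ for some k and all nonzero v ∈ E, w ∈ F. In particular, the absence of a dominated splitting of index j is robust under perturbation in this situation. -/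

import Mathlib

set_option maxHeartbeats 1000000
set_option synthInstance.maxHeartbeats 400000

abbrev Vd (d : ℕ) := EuclideanSpace ℝ (Fin d)

/-- The multiset of complex eigenvalues (with multiplicity) of an endomorphism. -/
noncomputable def specC {d : ℕ} (A : Vd d →L[ℝ] Vd d) : Multiset ℂ :=
  ((LinearMap.charpoly (A : Vd d →ₗ[ℝ] Vd d)).map (algebraMap ℝ ℂ)).roots

open Polynomial Filter

/-- L1: evaluation of mapped charpoly as a determinant. -/
lemma evalCharpolyDet {m : ℕ} (M : Matrix (Fin m) (Fin m) ℝ) (t : ℂ) :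
    ((M.charpoly).map (algebraMap ℝ ℂ)).eval t
      = (t • (1 : Matrix (Fin m) (Fin m) ℂ) - M.map (algebraMap ℝ ℂ)).det := by
  rw [← Matrix.charpoly_map]
  have h := RingHom.map_det (Polynomial.evalRingHom t) (M.map (algebraMap ℝ ℂ)).charmatrix
  have : ((M.map (algebraMap ℝ ℂ)).charpoly).eval t
      = ((Polynomial.evalRingHom t).mapMatrix (M.map (algebraMap ℝ ℂ)).charmatrix).det := by
    rw [Matrix.charpoly, ← h]; rfl
  rw [this]
  congr 1
  ext i k
  by_cases h : i = k
  · subst h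
    simp [Matrix.charmatrix_apply_eq, Matrix.one_apply, Matrix.sub_apply]
  · simp [Matrix.charmatrix_apply_ne _ _ _ h, Matrix.one_apply, h, Matrix.sub_apply]

/-- L2: a complex root of the (real) charpoly gives a real "rotation pair". -/
lemma exists_pair_of_charpoly_root {M : Type*} [AddCommGroup M] [Module ℝ M]
    [FiniteDimensional ℝ M] (T : M →ₗ[ℝ] M) (μ : ℂ)
    (h : ((LinearMap.charpoly T).map (algebraMap ℝ ℂ)).IsRoot μ) :
    ∃ x y : M, (x ≠ 0 ∨ y ≠ 0) ∧ T x = μ.re • x - μ.im • y ∧ T y = μ.im • x + μ.re • y := by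
  classical
  set n := Module.finrank ℝ M
  let b : Module.Basis (Fin n) ℝ M := Module.finBasis ℝ M
  set Mat := LinearMap.toMatrix b b T with hMat
  have hcp : LinearMap.charpoly T = Mat.charpoly := (LinearMap.charpoly_toMatrix T b).symm
  have hdet : (μ • (1 : Matrix (Fin n) (Fin n) ℂ) - Mat.map (algebraMap ℝ ℂ)).det = 0 := by
    rw [← evalCharpolyDet, ← hcp]; exact h
  obtain ⟨v, hv0, hv⟩ := (Matrix.exists_mulVec_eq_zero_iff).2 hdet
  have hMv : (Mat.map (algebraMap ℝ ℂ)).mulVec v = μ • v := by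
    rw [Matrix.sub_mulVec] at hv
    have h1 : (μ • (1 : Matrix (Fin n) (Fin n) ℂ)).mulVec v = μ • v := by
      simp [Matrix.smul_mulVec, Matrix.one_mulVec]
    rw [h1, sub_eq_zero] at hv
    exact hv.symm
  set xc : Fin n → ℝ := fun i => (v i).re with hxc
  set yc : Fin n → ℝ := fun i => (v i).im with hyc
  have hcoordre : Mat.mulVec xc = μ.re • xc - μ.im • yc := by
    funext i
    have h0 : ((Mat.map (algebraMap ℝ ℂ)).mulVec v) i = μ * v i := by rw [hMv]; rfl
    have hre := congrArg Complex.re h0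
    simp only [Matrix.mulVec, dotProduct, Matrix.map_apply, Complex.re_sum,
      Complex.mul_re, Complex.ofReal_re, Complex.ofReal_im, zero_mul, sub_zero] at hre
    simpa [Matrix.mulVec, dotProduct, hxc, hyc] using hre
  have hcoordim : Mat.mulVec yc = μ.im • xc + μ.re • yc := by
    funext i
    have h0 : ((Mat.map (algebraMap ℝ ℂ)).mulVec v) i = μ * v i := by rw [hMv]; rfl
    have him := congrArg Complex.im h0
    simp only [Matrix.mulVec, dotProduct, Matrix.map_apply, Complex.im_sum,
      Complex.mul_im, Complex.ofReal_re, Complex.ofReal_im, zero_mul, add_zero] at him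
    simpa [Matrix.mulVec, dotProduct, hxc, hyc, add_comm] using him
  set x : M := b.equivFun.symm xc with hxdef
  set y : M := b.equivFun.symm yc with hydef
  have hreprx : ⇑(b.repr x) = xc := by
    funext i
    rw [← Module.Basis.equivFun_apply, hxdef, LinearEquiv.apply_symm_apply]
  have hrepry : ⇑(b.repr y) = yc := by
    funext i
    rw [← Module.Basis.equivFun_apply, hydef, LinearEquiv.apply_symm_apply]
  have key : ∀ (z w : M) (c1 c2 : ℝ), Mat.mulVec (⇑(b.repr z)) = c1 • ⇑(b.repr z) + c2 • ⇑(b.repr w) →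
      T z = c1 • z + c2 • w := by
    intro z w c1 c2 hzw
    apply b.repr.injective
    apply DFunLike.coe_injective
    show ⇑(b.repr (T z)) = ⇑(b.repr (c1 • z + c2 • w))
    have h2 : ⇑(b.repr (T z)) = Mat.mulVec (⇑(b.repr z)) :=
      (LinearMap.toMatrix_mulVec_repr b b T z).symm
    rw [h2, hzw]
    simp [map_add, map_smul]
  refine ⟨x, y, ?_, ?_, ?_⟩
  · by_contra hcon
    push_neg at hcon
    obtain ⟨hx0, hy0⟩ := hcon
    apply hv0
    funext i
    have hxc0 : xc = 0 := by rw [← hreprx, hx0]; simp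
    have hyc0 : yc = 0 := by rw [← hrepry, hy0]; simp
    have h1 := congrFun hxc0 i
    have h2 := congrFun hyc0 i
    simp only [hxc, hyc, Pi.zero_apply] at h1 h2
    exact Complex.ext h1 h2
  · have := key x y μ.re (-μ.im) (by rw [hreprx, hrepry, hcoordre]; module)
    rw [this]; module
  · have := key y x μ.re μ.im (by rw [hreprx, hrepry, hcoordim]; module)
    rw [this]; module

/-- L3: power of a rotation pair. -/
lemma pair_pow {d : ℕ} (A' : Vd d →L[ℝ] Vd d) (x y : Vd d) (μ : ℂ)
    (hx : A' x = μ.re • x - μ.im • y) (hy : A' y = μ.im • x + μ.re • y) (k : ℕ) :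
    (A' ^ k) x = (μ ^ k).re • x - (μ ^ k).im • y ∧
      (A' ^ k) y = (μ ^ k).im • x + (μ ^ k).re • y := by
  induction k with
  | zero => simp
  | succ k ih =>
    obtain ⟨ih1, ih2⟩ := ih
    have hps : A' ^ (k + 1) = A' ^ k * A' := pow_succ A' k
    constructor
    · rw [hps, ContinuousLinearMap.mul_apply, hx, map_sub, map_smul, map_smul, ih1, ih2,
        pow_succ]
      simp only [Complex.mul_re, Complex.mul_im]
      module
    · rw [hps, ContinuousLinearMap.mul_apply, hy, map_add, map_smul, map_smul, ih1, ih2,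
        pow_succ]
      simp only [Complex.mul_re, Complex.mul_im]
      module

/-- L4/L5: norm identity for a rotation pair. -/
lemma pair_norm_sq {d : ℕ} (T : Vd d →L[ℝ] Vd d) (x y : Vd d) (μ : ℂ)
    (hx : T x = μ.re • x - μ.im • y) (hy : T y = μ.im • x + μ.re • y) :
    ‖T x‖ ^ 2 + ‖T y‖ ^ 2 = (‖μ‖) ^ 2 * (‖x‖ ^ 2 + ‖y‖ ^ 2) := by
  have habs : (‖μ‖) ^ 2 = μ.re ^ 2 + μ.im ^ 2 := by
    rw [Complex.sq_norm, Complex.normSq_apply]; ring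
  rw [hx, hy, habs]
  have e1 : ∀ u : Vd d, ‖u‖ ^ 2 = (inner ℝ u u : ℝ) := fun u => (real_inner_self_eq_norm_sq u).symm
  rw [e1, e1, e1, e1]
  simp only [inner_sub_left, inner_sub_right, inner_add_left, inner_add_right,
    real_inner_smul_left, real_inner_smul_right]
  rw [real_inner_comm y x]
  ring

/-- L6: pair extraction inside an invariant submodule. -/
lemma exists_pair_in_submodule {d : ℕ} (A' : Vd d →L[ℝ] Vd d) (E : Submodule ℝ (Vd d))
    (hE : ∀ v ∈ E, A' v ∈ E) (μ : ℂ)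
    (h : ((LinearMap.charpoly ((A' : Vd d →ₗ[ℝ] Vd d).restrict hE)).map
      (algebraMap ℝ ℂ)).IsRoot μ) :
    ∃ x y : Vd d, x ∈ E ∧ y ∈ E ∧ (x ≠ 0 ∨ y ≠ 0) ∧
      A' x = μ.re • x - μ.im • y ∧ A' y = μ.im • x + μ.re • y := by
  obtain ⟨x0, y0, hne, hx0, hy0⟩ := exists_pair_of_charpoly_root _ μ h
  refine ⟨(x0 : Vd d), (y0 : Vd d), x0.2, y0.2, ?_, ?_, ?_⟩
  · rcases hne with h0 | h0
    · exact Or.inl (fun hc => h0 (Subtype.coe_injective (by simpa using hc)))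
    · exact Or.inr (fun hc => h0 (Subtype.coe_injective (by simpa using hc)))
  · have := congrArg (Subtype.val) hx0
    simpa using this
  · have := congrArg (Subtype.val) hy0
    simpa using this

/-- L7: charpoly factorization along an invariant complementary pair. -/
lemma charpoly_eq_mul_of_isCompl {d : ℕ} (A' : Vd d →L[ℝ] Vd d)
    (E F : Submodule ℝ (Vd d)) (hc : IsCompl E F)
    (hE : ∀ v ∈ E, A' v ∈ E) (hF : ∀ v ∈ F, A' v ∈ F) :
    LinearMap.charpoly (A' : Vd d →ₗ[ℝ] Vd d) =
      LinearMap.charpoly ((A' : Vd d →ₗ[ℝ] Vd d).restrict hE) *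
      LinearMap.charpoly ((A' : Vd d →ₗ[ℝ] Vd d).restrict hF) := by
  set T := (A' : Vd d →ₗ[ℝ] Vd d) with hTdef
  set e := Submodule.prodEquivOfIsCompl E F hc
  have hT : T = e.conj ((T.restrict hE).prodMap (T.restrict hF)) := by
    apply LinearMap.ext
    intro v
    obtain ⟨p, rfl⟩ := e.surjective v
    rw [LinearEquiv.conj_apply]
    simp only [LinearMap.coe_comp, Function.comp_apply, LinearEquiv.coe_coe]
    rw [LinearEquiv.symm_apply_apply]
    obtain ⟨x, y⟩ := p
    rw [Submodule.coe_prodEquivOfIsCompl']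
    simp only [LinearMap.prodMap_apply]
    rw [Submodule.coe_prodEquivOfIsCompl']
    simp [LinearMap.restrict_coe_apply, map_add]
  have h2 := congrArg LinearMap.charpoly hT
  rw [LinearEquiv.charpoly_conj, LinearMap.charpoly_prodMap] at h2
  exact h2

/-- L8: conjugation of evaluations of mapped real polynomials. -/
lemma eval_map_conj (p : Polynomial ℝ) (t : ℂ) :
    (p.map (algebraMap ℝ ℂ)).eval ((starRingEnd ℂ) t)
      = (starRingEnd ℂ) ((p.map (algebraMap ℝ ℂ)).eval t) := by
  rw [eval_map, eval_map, Polynomial.hom_eval₂]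
  congr 1
  ext x
  simp [Complex.conj_ofReal]

/-- L9: enumerating the roots of a mapped monic real polynomial. -/
lemma exists_root_enum (p : Polynomial ℝ) (m : ℕ) (hm : p.Monic) (hdeg : p.natDegree = m) :
    ∃ a : Fin m → ℂ, p.map (algebraMap ℝ ℂ) = ∏ i : Fin m, (X - C (a i)) := by
  set P := p.map (algebraMap ℝ ℂ) with hP
  have hPm : P.Monic := hm.map _
  have hPdeg : P.natDegree = m := by rw [hP, p.natDegree_map (algebraMap ℝ ℂ), hdeg]
  have hsplit : P.Splits := IsAlgClosed.splits P
  have hcard : P.roots.card = m := by rw [splits_iff_card_roots.mp hsplit, hPdeg]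
  set l := P.roots.toList with hl
  have hlen : l.length = m := by rw [hl, Multiset.length_toList, hcard]
  refine ⟨fun i => l.get (Fin.cast hlen.symm i), ?_⟩
  have hprod := hsplit.eq_prod_roots_of_monic hPm
  rw [hprod]
  have : P.roots = (l : Multiset ℂ) := by rw [hl, Multiset.coe_toList]
  rw [this, Multiset.map_coe, Multiset.prod_coe]
  have hofn : l = List.ofFn (fun i : Fin m => l.get (Fin.cast hlen.symm i)) := by
    apply List.ext_get
    · simp [hlen]
    · intro i h1 h2
      simp
  conv_lhs => rw [hofn]
  rw [List.map_ofFn, List.prod_ofFn]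
  rfl

lemma pos_sq_sum {d : ℕ} {x y : Vd d} (h : x ≠ 0 ∨ y ≠ 0) : 0 < ‖x‖ ^ 2 + ‖y‖ ^ 2 := by
  rcases h with h | h
  · have := norm_pos_iff.mpr h
    positivity
  · have := norm_pos_iff.mpr h
    positivity

/-- L10: roots of charpoly are bounded by the operator norm. -/
lemma root_abs_le_norm {d : ℕ} (A' : Vd d →L[ℝ] Vd d) (μ : ℂ)
    (h : ((LinearMap.charpoly (A' : Vd d →ₗ[ℝ] Vd d)).map (algebraMap ℝ ℂ)).IsRoot μ) :
    ‖μ‖ ≤ ‖A'‖ := by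
  obtain ⟨x, y, hne, hx, hy⟩ := exists_pair_of_charpoly_root (A' : Vd d →ₗ[ℝ] Vd d) μ h
  have hx' : A' x = μ.re • x - μ.im • y := by simpa using hx
  have hy' : A' y = μ.im • x + μ.re • y := by simpa using hy
  have hid := pair_norm_sq A' x y μ hx' hy'
  have hb1 : ‖A' x‖ ^ 2 ≤ ‖A'‖ ^ 2 * ‖x‖ ^ 2 := by
    have := A'.le_opNorm x
    nlinarith [norm_nonneg (A' x), norm_nonneg x, norm_nonneg A']
  have hb2 : ‖A' y‖ ^ 2 ≤ ‖A'‖ ^ 2 * ‖y‖ ^ 2 := by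
    have := A'.le_opNorm y
    nlinarith [norm_nonneg (A' y), norm_nonneg y, norm_nonneg A']
  have hs := pos_sq_sum hne
  have habs2 : ‖μ‖ ^ 2 ≤ ‖A'‖ ^ 2 := by nlinarith
  nlinarith [norm_nonneg μ, norm_nonneg A']

lemma comb_ineq {a1 a2 b1 b2 c1 c2 e1 e2 : ℝ} (q1 : a1 * b1 ≤ 1/4 * (c1 * e1))
    (q2 : a1 * b2 ≤ 1/4 * (c2 * e1)) (q3 : a2 * b1 ≤ 1/4 * (c1 * e2))
    (q4 : a2 * b2 ≤ 1/4 * (c2 * e2)) :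
    (a1 + a2) * (b1 + b2) ≤ 1/4 * ((c1 + c2) * (e1 + e2)) := by nlinarith

lemma cancel_sq {X Y s t : ℝ} (hs : 0 < s) (ht : 0 < t) (hX : 0 ≤ X) (hY : 0 ≤ Y)
    (h : X ^ 2 * (s * t) ≤ 1 / 4 * (Y ^ 2 * (t * s))) : X ≤ Y := by
  have h1 : X ^ 2 ≤ 1 / 4 * Y ^ 2 := by nlinarith [mul_pos hs ht]
  nlinarith [h1, hX, hY, sq_nonneg (X + Y)]

/-- L11: the package extracted from a dominated splitting. -/
lemma splitting_package {d j : ℕ} (hjd : j ≤ d) (A' : Vd d →L[ℝ] Vd d)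
    (E F : Submodule ℝ (Vd d)) (k : ℕ) (hk : 1 ≤ k) (hc : IsCompl E F)
    (hdim : Module.finrank ℝ E = j)
    (hE : ∀ v ∈ E, A' v ∈ E) (hF : ∀ v ∈ F, A' v ∈ F)
    (hdom : ∀ u ∈ E, ∀ w ∈ F, ‖u‖ = 1 → ‖w‖ = 1 →
      ‖(A' ^ k) u‖ ≤ (1 / 2) * ‖(A' ^ k) w‖) :
    ∃ (a : Fin j → ℂ) (b : Fin (d - j) → ℂ),
      (∀ t : ℂ, (∏ i, (t - a i)) * (∏ i, (t - b i))
        = ((LinearMap.charpoly (A' : Vd d →ₗ[ℝ] Vd d)).map (algebraMap ℝ ℂ)).eval t) ∧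
      (∀ i i', ‖a i‖ ≤ ‖b i'‖) ∧
      (∀ t, (∏ i, ((starRingEnd ℂ) t - a i)) = (starRingEnd ℂ) (∏ i, (t - a i))) ∧
      (∀ i, ‖a i‖ ≤ ‖A'‖) ∧ (∀ i', ‖b i'‖ ≤ ‖A'‖) := by
  classical
  set T := (A' : Vd d →ₗ[ℝ] Vd d) with hTdef
  set pE := LinearMap.charpoly (T.restrict hE) with hpE
  set qF := LinearMap.charpoly (T.restrict hF) with hqF
  have hdimF : Module.finrank ℝ F = d - j := by
    have h1 := Submodule.finrank_add_eq_of_isCompl hc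
    have h2 : Module.finrank ℝ (Vd d) = d := finrank_euclideanSpace_fin
    omega
  have hpEdeg : pE.natDegree = j := by
    rw [hpE, LinearMap.charpoly_natDegree, hdim]
  have hqFdeg : qF.natDegree = d - j := by
    rw [hqF, LinearMap.charpoly_natDegree, hdimF]
  obtain ⟨a, ha⟩ := exists_root_enum pE j (LinearMap.charpoly_monic _) hpEdeg
  obtain ⟨b, hb⟩ := exists_root_enum qF (d - j) (LinearMap.charpoly_monic _) hqFdeg
  have hfac : T.charpoly = pE * qF := charpoly_eq_mul_of_isCompl A' E F hc hE hF
  have hfacC : T.charpoly.map (algebraMap ℝ ℂ)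
      = (∏ i, (X - C (a i))) * ∏ i, (X - C (b i)) := by
    rw [hfac, Polynomial.map_mul, ha, hb]
  have hevalprod : ∀ (m : ℕ) (f : Fin m → ℂ) (t : ℂ),
      (∏ i, (X - C (f i))).eval t = ∏ i, (t - f i) := by
    intro m f t
    rw [Polynomial.eval_prod]
    exact Finset.prod_congr rfl fun i _ => by simp
  -- roots of the factors are roots of the charpoly
  have hrootfull : ∀ μ : ℂ, (∏ i, (μ - a i)) = 0 ∨ (∏ i, (μ - b i)) = 0 →
      (T.charpoly.map (algebraMap ℝ ℂ)).IsRoot μ := by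
    intro μ hμ
    have : (T.charpoly.map (algebraMap ℝ ℂ)).eval μ = 0 := by
      rw [hfacC, Polynomial.eval_mul, hevalprod, hevalprod]
      rcases hμ with h | h <;> rw [h] <;> ring
    exact this
  have hrootaE : ∀ i, (pE.map (algebraMap ℝ ℂ)).IsRoot (a i) := by
    intro i
    show (pE.map (algebraMap ℝ ℂ)).eval (a i) = 0
    rw [ha, hevalprod]
    exact Finset.prod_eq_zero (Finset.mem_univ i) (by ring)
  have hrootbF : ∀ i, (qF.map (algebraMap ℝ ℂ)).IsRoot (b i) := by
    intro i
    show (qF.map (algebraMap ℝ ℂ)).eval (b i) = 0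
    rw [hb, hevalprod]
    exact Finset.prod_eq_zero (Finset.mem_univ i) (by ring)
  -- general domination inequality
  have hdom' : ∀ u ∈ E, ∀ w ∈ F, ‖(A' ^ k) u‖ * ‖w‖ ≤ (1 / 2) * ‖(A' ^ k) w‖ * ‖u‖ := by
    intro u hu w hw
    by_cases hu0 : u = 0
    · subst hu0; simp
    by_cases hw0 : w = 0
    · subst hw0; simp
    have hnu : 0 < ‖u‖ := norm_pos_iff.mpr hu0
    have hnw : 0 < ‖w‖ := norm_pos_iff.mpr hw0
    have h1 := hdom (‖u‖⁻¹ • u) (E.smul_mem _ hu) (‖w‖⁻¹ • w) (F.smul_mem _ hw)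
      (norm_smul_inv_norm hu0) (norm_smul_inv_norm hw0)
    rw [map_smul, map_smul, norm_smul, norm_smul] at h1
    simp only [norm_inv, norm_norm] at h1
    have h2 : ‖u‖⁻¹ * ‖(A' ^ k) u‖ ≤ 1 / 2 * (‖w‖⁻¹ * ‖(A' ^ k) w‖) := h1
    have := mul_le_mul_of_nonneg_left h2 (le_of_lt (mul_pos hnu hnw))
    calc ‖(A' ^ k) u‖ * ‖w‖ = ‖u‖ * ‖w‖ * (‖u‖⁻¹ * ‖(A' ^ k) u‖) := by
          field_simp
      _ ≤ ‖u‖ * ‖w‖ * (1 / 2 * (‖w‖⁻¹ * ‖(A' ^ k) w‖)) := this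
      _ = 1 / 2 * ‖(A' ^ k) w‖ * ‖u‖ := by field_simp
  refine ⟨a, b, ?_, ?_, ?_, ?_, ?_⟩
  · intro t
    rw [hfacC, Polynomial.eval_mul, hevalprod, hevalprod]
  · intro i i'
    obtain ⟨x, y, hxE, hyE, hxyne, hx, hy⟩ := exists_pair_in_submodule A' E hE (a i) (hrootaE i)
    obtain ⟨u, v, huF, hvF, huvne, hu, hv⟩ := exists_pair_in_submodule A' F hF (b i') (hrootbF i')
    obtain ⟨hxk, hyk⟩ := pair_pow A' x y (a i) hx hy k
    obtain ⟨huk, hvk⟩ := pair_pow A' u v (b i') hu hv k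
    have hEnorm := pair_norm_sq (A' ^ k) x y ((a i) ^ k) hxk hyk
    have hFnorm := pair_norm_sq (A' ^ k) u v ((b i') ^ k) huk hvk
    set B := A' ^ k
    have d1 := hdom' x hxE u huF
    have d2 := hdom' x hxE v hvF
    have d3 := hdom' y hyE u huF
    have d4 := hdom' y hyE v hvF
    have sE := pos_sq_sum hxyne
    have sF := pos_sq_sum huvne
    have sq_ineq : ∀ {p q P Q : ℝ}, 0 ≤ p → 0 ≤ q → p * q ≤ 1 / 2 * Q * P →
        p ^ 2 * q ^ 2 ≤ (1 / 4) * (Q ^ 2 * P ^ 2) := by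
      intro p q P Q hp hq h
      have h0 : 0 ≤ p * q := mul_nonneg hp hq
      have h2 := mul_le_mul h h h0 (le_trans h0 h)
      nlinarith [h2]
    have q1 := sq_ineq (norm_nonneg (B x)) (norm_nonneg u) d1
    have q2 := sq_ineq (norm_nonneg (B x)) (norm_nonneg v) d2
    have q3 := sq_ineq (norm_nonneg (B y)) (norm_nonneg u) d3
    have q4 := sq_ineq (norm_nonneg (B y)) (norm_nonneg v) d4
    have hcomb := comb_ineq q1 q2 q3 q4
    rw [hEnorm, hFnorm] at hcomb
    have hcomb2 : ‖(a i) ^ k‖ ^ 2 * ((‖x‖ ^ 2 + ‖y‖ ^ 2) * (‖u‖ ^ 2 + ‖v‖ ^ 2))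
        ≤ 1 / 4 * (‖(b i') ^ k‖ ^ 2 * ((‖u‖ ^ 2 + ‖v‖ ^ 2) * (‖x‖ ^ 2 + ‖y‖ ^ 2))) := by
      calc ‖(a i) ^ k‖ ^ 2 * ((‖x‖ ^ 2 + ‖y‖ ^ 2) * (‖u‖ ^ 2 + ‖v‖ ^ 2))
          = ‖(a i) ^ k‖ ^ 2 * (‖x‖ ^ 2 + ‖y‖ ^ 2) * (‖u‖ ^ 2 + ‖v‖ ^ 2) := by ring
        _ ≤ 1 / 4 * (‖(b i') ^ k‖ ^ 2 * (‖u‖ ^ 2 + ‖v‖ ^ 2) * (‖x‖ ^ 2 + ‖y‖ ^ 2)) := hcomb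
        _ = 1 / 4 * (‖(b i') ^ k‖ ^ 2 * ((‖u‖ ^ 2 + ‖v‖ ^ 2) * (‖x‖ ^ 2 + ‖y‖ ^ 2))) := by ring
    have hkpow0 := cancel_sq sE sF (norm_nonneg ((a i) ^ k))
      (norm_nonneg ((b i') ^ k)) hcomb2
    rw [norm_pow, norm_pow] at hkpow0
    have hkpow : ‖a i‖ ^ k ≤ ‖b i'‖ ^ k := hkpow0
    by_contra hlt
    push_neg at hlt
    have := pow_lt_pow_left₀ hlt (norm_nonneg (b i')) (by omega : k ≠ 0)
    linarith
  · intro t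
    have h8 := eval_map_conj pE t
    rw [ha, hevalprod, hevalprod] at h8
    exact h8
  · intro i
    exact root_abs_le_norm A' (a i) (hrootfull (a i) (Or.inl
      (Finset.prod_eq_zero (Finset.mem_univ i) (by ring))))
  · intro i'
    exact root_abs_le_norm A' (b i') (hrootfull (b i') (Or.inr
      (Finset.prod_eq_zero (Finset.mem_univ i') (by ring))))

lemma abs_coord_le {d : ℕ} (x : Vd d) (i : Fin d) : |x i| ≤ ‖x‖ := by
  rw [EuclideanSpace.norm_eq]
  have h1 : |x i| = Real.sqrt (|x i| ^ 2) := by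
    rw [Real.sqrt_sq_eq_abs, abs_abs]
  rw [h1]
  apply Real.sqrt_le_sqrt
  have : ‖x i‖ ^ 2 = |x i| ^ 2 := by rw [Real.norm_eq_abs]
  rw [← this]
  exact Finset.single_le_sum (fun j _ => sq_nonneg ‖x j‖) (Finset.mem_univ i)

/-- L13: convergence of evaluated characteristic polynomials. -/
lemma charpoly_eval_tendsto {d : ℕ} (A : Vd d →L[ℝ] Vd d) (A'' : ℕ → Vd d →L[ℝ] Vd d)
    (hA : Tendsto (fun n => ‖A - A'' n‖) atTop (nhds 0)) (t : ℂ) :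
    Tendsto (fun n =>
        ((LinearMap.charpoly ((A'' n : Vd d →ₗ[ℝ] Vd d))).map (algebraMap ℝ ℂ)).eval t)
      atTop (nhds (((LinearMap.charpoly ((A : Vd d →ₗ[ℝ] Vd d))).map (algebraMap ℝ ℂ)).eval t)) := by
  classical
  set b0 : Module.Basis (Fin d) ℝ (Vd d) := PiLp.basisFun 2 ℝ (Fin d) with hb0
  set Mx : (Vd d →L[ℝ] Vd d) → Matrix (Fin d) (Fin d) ℝ :=
    fun S => LinearMap.toMatrix b0 b0 (S : Vd d →ₗ[ℝ] Vd d) with hMx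
  have key : ∀ S : Vd d →L[ℝ] Vd d,
      ((LinearMap.charpoly ((S : Vd d →ₗ[ℝ] Vd d))).map (algebraMap ℝ ℂ)).eval t
        = (t • (1 : Matrix (Fin d) (Fin d) ℂ) - (Mx S).map (algebraMap ℝ ℂ)).det := by
    intro S
    rw [← evalCharpolyDet]
    congr 2
    exact (LinearMap.charpoly_toMatrix _ b0).symm
  simp only [key]
  have hent : Tendsto (fun n => Mx (A'' n)) atTop (nhds (Mx A)) := by
    apply tendsto_pi_nhds.2
    intro i
    rw [tendsto_pi_nhds]
    intro k
    have hform : ∀ S : Vd d →L[ℝ] Vd d, Mx S i k = (S (b0 k)) i := by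
      intro S
      simp [hMx, LinearMap.toMatrix_apply, hb0]
    simp only [hform]
    rw [← tendsto_sub_nhds_zero_iff]
    refine squeeze_zero_norm (a := fun n => ‖A - A'' n‖ * ‖b0 k‖) ?_ ?_
    · intro n
      have h1 : ‖(A'' n) (b0 k) i - A (b0 k) i‖ = |((A'' n - A) (b0 k)) i| := by
        simp [Real.norm_eq_abs, ContinuousLinearMap.sub_apply]
      rw [h1]
      calc |((A'' n - A) (b0 k)) i| ≤ ‖(A'' n - A) (b0 k)‖ := abs_coord_le _ i
        _ ≤ ‖A'' n - A‖ * ‖b0 k‖ := (A'' n - A).le_opNorm _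
        _ = ‖A - A'' n‖ * ‖b0 k‖ := by rw [norm_sub_rev]
    · simpa using hA.mul_const ‖b0 k‖
  have hcont : Continuous (fun M : Matrix (Fin d) (Fin d) ℝ =>
      (t • (1 : Matrix (Fin d) (Fin d) ℂ) - M.map (algebraMap ℝ ℂ)).det) := by
    apply Continuous.matrix_det
    exact continuous_const.sub (Continuous.matrix_map continuous_id Complex.continuous_ofReal)
  exact (hcont.continuousAt).tendsto.comp hent

lemma eval_prod_fn {m : ℕ} (f : Fin m → ℂ) (t : ℂ) :
    ((Multiset.map (fun z => X - C z) (Multiset.map f Finset.univ.val)).prod).eval t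
      = ∏ i, (t - f i) := by
  rw [Multiset.map_map, eval_multiset_prod, Multiset.map_map]
  rw [Finset.prod_eq_multiset_prod]
  congr 1
  apply Multiset.map_congr rfl
  intro i _
  simp

/-- The final multiset counting argument. -/
lemma multiset_finale {d : ℕ} (r : Fin d → ℂ) (j : ℕ) (hj1 : 1 ≤ j) (hjd : j < d)
    (hlow : ∀ m : Fin d, (m : ℕ) < j - 1 →
      ‖r m‖ < ‖r ⟨j - 1, Nat.lt_of_le_of_lt (Nat.sub_le j 1) hjd⟩‖)
    (hhigh : ∀ m : Fin d, j < (m : ℕ) →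
      ‖r ⟨j, hjd⟩‖ < ‖r m‖)
    (heq : ‖r ⟨j - 1, Nat.lt_of_le_of_lt (Nat.sub_le j 1) hjd⟩‖ = ‖r ⟨j, hjd⟩‖)
    (hconj : r ⟨j, hjd⟩ = (starRingEnd ℂ) (r ⟨j - 1, Nat.lt_of_le_of_lt (Nat.sub_le j 1) hjd⟩))
    (him : (r ⟨j - 1, Nat.lt_of_le_of_lt (Nat.sub_le j 1) hjd⟩).im ≠ 0)
    (α : Fin j → ℂ) (β : Fin (d - j) → ℂ)
    (h1 : ∀ t : ℂ, (∏ i, (t - α i)) * (∏ i, (t - β i)) = ∏ m, (t - r m))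
    (h2 : ∀ i i', ‖α i‖ ≤ ‖β i'‖)
    (h3 : ∀ t : ℂ, (∏ i, ((starRingEnd ℂ) t - α i)) = (starRingEnd ℂ) (∏ i, (t - α i))) :
    False := by
  classical
  set ρ := ‖r ⟨j - 1, by omega⟩‖ with hρ
  set lam0 := r ⟨j - 1, by omega⟩ with hlam0
  set lam1 := r ⟨j, hjd⟩ with hlam1
  set S : Multiset ℂ := Multiset.map α Finset.univ.val with hS
  set T : Multiset ℂ := Multiset.map β Finset.univ.val with hT
  set R : Multiset ℂ := Multiset.map r Finset.univ.val with hR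
  have cardS : Multiset.card S = j := by simp [hS]
  have cardT : Multiset.card T = d - j := by simp [hT]
  -- generic facts about products over finite index functions
  have evalprod : ∀ (m : ℕ) (f : Fin m → ℂ) (t : ℂ),
      ((Multiset.map (fun z => X - C z) (Multiset.map f Finset.univ.val)).prod).eval t
        = ∏ i, (t - f i) := by
    intro m f t
    rw [Multiset.map_map, eval_multiset_prod, Multiset.map_map]
    rw [Finset.prod_eq_multiset_prod]
    congr 1
    apply Multiset.map_congr rfl
    intro i _
    simp
  have prodeq : ∀ (m : ℕ) (f g : Fin m → ℂ),
      (∀ t : ℂ, (∏ i, (t - f i)) = ∏ i, (t - g i)) →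
      Multiset.map f Finset.univ.val = Multiset.map g Finset.univ.val := by
    intro m f g hfg
    have hpoly : (Multiset.map (fun z => X - C z) (Multiset.map f Finset.univ.val)).prod
        = (Multiset.map (fun z => X - C z) (Multiset.map g Finset.univ.val)).prod := by
      apply Polynomial.funext
      intro t
      rw [evalprod, evalprod]
      exact hfg t
    have h4 := congrArg Polynomial.roots hpoly
    rwa [roots_multiset_prod_X_sub_C, roots_multiset_prod_X_sub_C] at h4
  -- S + T = R
  have hSTR : S + T = R := by
    have hpoly : (Multiset.map (fun z => X - C z) (S + T)).prod
        = (Multiset.map (fun z => X - C z) R).prod := by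
      apply Polynomial.funext
      intro t
      rw [Multiset.map_add, Multiset.prod_add]
      rw [show (Multiset.map (fun z => X - C z) S) = Multiset.map (fun z => X - C z) (Multiset.map α Finset.univ.val) from rfl]
      rw [show (Multiset.map (fun z => X - C z) T) = Multiset.map (fun z => X - C z) (Multiset.map β Finset.univ.val) from rfl]
      rw [eval_mul, evalprod, evalprod, hR, evalprod]
      exact h1 t
    have h4 := congrArg Polynomial.roots hpoly
    rwa [roots_multiset_prod_X_sub_C, roots_multiset_prod_X_sub_C] at h4
  -- S is closed under conjugation
  have hSconj : Multiset.map (starRingEnd ℂ) S = S := by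
    have key : ∀ u : ℂ, (∏ i, (u - (starRingEnd ℂ) (α i))) = ∏ i, (u - α i) := by
      intro u
      have h5 := h3 ((starRingEnd ℂ) u)
      rw [Complex.conj_conj] at h5
      rw [map_prod] at h5
      have : ∀ i : Fin j, (starRingEnd ℂ) ((starRingEnd ℂ) u - α i)
          = u - (starRingEnd ℂ) (α i) := by
        intro i
        rw [map_sub, Complex.conj_conj]
      rw [Finset.prod_congr rfl (fun i _ => this i)] at h5
      exact h5.symm
    rw [hS, Multiset.map_map]
    exact prodeq j (fun i => (starRingEnd ℂ) (α i)) α (fun u => key u)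
  -- index classification
  have hclass : ∀ m : Fin d, ‖r m‖ < ρ ↔ (m : ℕ) < j - 1 := by
    intro m
    constructor
    · intro hm
      by_contra hge
      push_neg at hge
      rcases Nat.lt_trichotomy (m : ℕ) j with hmj | hmj | hmj
      · have : (m : ℕ) = j - 1 := by omega
        have : m = ⟨j - 1, by omega⟩ := Fin.ext this
        rw [this] at hm
        exact absurd hm (lt_irrefl _)
      · have hme : m = ⟨j, hjd⟩ := Fin.ext hmj
        rw [hme] at hm
        have h' : ‖lam1‖ < ρ := hm
        rw [← heq] at h'
        exact absurd h' (lt_irrefl _)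
      · have := hhigh m hmj
        rw [← heq] at this
        linarith
    · intro hm
      exact hlow m hm
  have habsρ : ∀ z ∈ R, ‖z‖ = ρ → z = lam0 ∨ z = lam1 := by
    intro z hz habs
    rw [hR] at hz
    obtain ⟨m, _, rfl⟩ := Multiset.mem_map.1 hz
    rcases Nat.lt_trichotomy (m : ℕ) j with hmj | hmj | hmj
    · rcases Nat.lt_or_ge (m : ℕ) (j - 1) with hmj1 | hmj1
      · have := hlow m hmj1
        rw [habs] at this
        exact absurd this (lt_irrefl _)
      · have : (m : ℕ) = j - 1 := by omega
        exact Or.inl (by rw [hlam0]; congr 1; exact Fin.ext this)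
    · exact Or.inr (by rw [hlam1]; congr 1; exact Fin.ext hmj)
    · have := hhigh m hmj
      rw [← heq, habs] at this
      exact absurd this (lt_irrefl _)
  -- cardinality of small part of R
  have hRsmall : (R.filter (fun z => ‖z‖ < ρ)).card = j - 1 := by
    rw [hR, Multiset.filter_map]
    rw [Multiset.card_map]
    have : Multiset.filter ((fun z => ‖z‖ < ρ) ∘ r) Finset.univ.val
        = (Finset.univ.filter (fun m : Fin d => ‖r m‖ < ρ)).val := rfl
    rw [this]
    have heqf : Finset.univ.filter (fun m : Fin d => ‖r m‖ < ρ)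
        = Finset.Iio (⟨j - 1, by omega⟩ : Fin d) := by
      ext m
      simp only [Finset.mem_filter, Finset.mem_univ, true_and, Finset.mem_Iio]
      rw [hclass m]
      exact ⟨fun h => by rw [Fin.lt_def]; exact h, fun h => by rw [Fin.lt_def] at h; exact h⟩
    rw [show ((Finset.univ.filter (fun m : Fin d => ‖r m‖ < ρ)).val.card)
        = (Finset.univ.filter (fun m : Fin d => ‖r m‖ < ρ)).card from rfl]
    rw [heqf, Fin.card_Iio]
  -- elements of S and T via indices
  have hmemS : ∀ s ∈ S, ∃ i, α i = s := by
    intro s hs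
    obtain ⟨i, _, rfl⟩ := Multiset.mem_map.1 hs
    exact ⟨i, rfl⟩
  have hmemT : ∀ t ∈ T, ∃ i, β i = t := by
    intro t ht
    obtain ⟨i, _, rfl⟩ := Multiset.mem_map.1 ht
    exact ⟨i, rfl⟩
  -- claim 1 : T has no element of modulus < ρ
  have hTbig : ∀ t ∈ T, ¬ (‖t‖ < ρ) := by
    intro t0 ht0 habs
    have hSsmall : ∀ s ∈ S, ‖s‖ < ρ := by
      intro s hs
      obtain ⟨i, rfl⟩ := hmemS s hs
      obtain ⟨i', rfl⟩ := hmemT t0 ht0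
      exact lt_of_le_of_lt (h2 i i') habs
    have hle : t0 ::ₘ S ≤ R := by
      rw [← hSTR, add_comm]
      have h6 : t0 ::ₘ S = {t0} + S := by rw [Multiset.singleton_add]
      rw [h6]
      exact add_le_add_left (Multiset.singleton_le.2 ht0) S
    have h7 : (t0 ::ₘ S).filter (fun z => ‖z‖ < ρ) = t0 ::ₘ S := by
      rw [Multiset.filter_eq_self]
      intro z hz
      rcases Multiset.mem_cons.1 hz with rfl | hz
      · exact habs
      · exact hSsmall z hz
    have h8 := Multiset.card_le_card (Multiset.filter_le_filter
      (fun z => ‖z‖ < ρ) hle)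
    rw [h7, hRsmall, Multiset.card_cons, cardS] at h8
    omega
  -- S has exactly one element of modulus ≥ ρ
  have hfiltR : R.filter (fun z => ‖z‖ < ρ) = S.filter (fun z => ‖z‖ < ρ) := by
    rw [← hSTR, Multiset.filter_add]
    rw [Multiset.filter_eq_nil.2 hTbig, add_zero]
  have hSsmallcard : (S.filter (fun z => ‖z‖ < ρ)).card = j - 1 := by
    rw [← hfiltR, hRsmall]
  have hSbigcard : (S.filter (fun z => ¬ ‖z‖ < ρ)).card = 1 := by
    have h9 := congrArg Multiset.card (Multiset.filter_add_not (fun z => ‖z‖ < ρ) S)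
    rw [Multiset.card_add, hSsmallcard, cardS] at h9
    omega
  obtain ⟨s0, hs0⟩ := Multiset.card_eq_one.1 hSbigcard
  have hs0S : s0 ∈ S := by
    have : s0 ∈ S.filter (fun z => ¬ ‖z‖ < ρ) := by rw [hs0]; simp
    exact (Multiset.mem_filter.1 this).1
  have hs0big : ¬ ‖s0‖ < ρ := by
    have : s0 ∈ S.filter (fun z => ¬ ‖z‖ < ρ) := by rw [hs0]; simp
    exact (Multiset.mem_filter.1 this).2
  have htwo : ∀ z1 z2 : ℂ, z1 ≠ z2 → z1 ∈ S → z2 ∈ S →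
      ¬ ‖z1‖ < ρ → ¬ ‖z2‖ < ρ → False := by
    intro z1 z2 hne hz1 hz2 hb1 hb2
    have m1 : z1 ∈ S.filter (fun z => ¬ ‖z‖ < ρ) := Multiset.mem_filter.2 ⟨hz1, hb1⟩
    have m2 : z2 ∈ S.filter (fun z => ¬ ‖z‖ < ρ) := Multiset.mem_filter.2 ⟨hz2, hb2⟩
    rw [hs0] at m1 m2
    rw [Multiset.mem_singleton] at m1 m2
    exact hne (m1.trans m2.symm)
  have hlam0R : lam0 ∈ R := by
    rw [hR]
    exact Multiset.mem_map.2 ⟨⟨j - 1, by omega⟩, by simp, rfl⟩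
  have hlam1R : lam1 ∈ R := by
    rw [hR]
    exact Multiset.mem_map.2 ⟨⟨j, hjd⟩, by simp, rfl⟩
  have hlamne : lam0 ≠ lam1 := by
    intro hcon
    have hcc : lam0 = (starRingEnd ℂ) lam0 := by rw [← hconj]; exact hcon
    exact him (Complex.conj_eq_iff_im.1 hcc.symm)
  have habs1 : ‖lam1‖ = ρ := heq.symm
  rcases lt_or_eq_of_le (not_lt.1 hs0big) with hgt | heqρ
  · -- |s0| > ρ : both lam0 lam1 must lie in S
    have hinS : ∀ z, z ∈ R → ‖z‖ = ρ → z ∈ S := by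
      intro z hzR hzabs
      rw [← hSTR] at hzR
      rcases Multiset.mem_add.1 hzR with hz | hz
      · exact hz
      · exfalso
        obtain ⟨i, rfl⟩ := hmemS s0 hs0S
        obtain ⟨i', rfl⟩ := hmemT z hz
        have := h2 i i'
        rw [hzabs] at this
        linarith
    have hlam0S := hinS lam0 hlam0R (by rw [hρ, hlam0])
    have hlam1S := hinS lam1 hlam1R habs1
    exact htwo lam0 lam1 hlamne hlam0S hlam1S (by rw [hρ, hlam0]; exact lt_irrefl _)
      (by rw [habs1]; exact lt_irrefl _)
  · -- |s0| = ρ : s0 and its conjugate are distinct elements of S of modulus ρ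
    have hs0R : s0 ∈ R := by rw [← hSTR]; exact Multiset.mem_add.2 (Or.inl hs0S)
    have hcases := habsρ s0 hs0R heqρ.symm
    have hs0im : s0.im ≠ 0 := by
      rcases hcases with h | h
      · rw [h]; exact him
      · rw [h, hconj]; simpa using him
    have hconjS : (starRingEnd ℂ) s0 ∈ S := by
      rw [← hSconj]
      exact Multiset.mem_map_of_mem _ hs0S
    have hconjne : (starRingEnd ℂ) s0 ≠ s0 := by
      intro hcon
      exact hs0im (Complex.conj_eq_iff_im.1 hcon)
    have hconjabs : ¬ ‖(starRingEnd ℂ) s0‖ < ρ := by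
      rw [Complex.norm_conj, ← heqρ]
      exact lt_irrefl _
    exact htwo _ s0 hconjne hconjS hs0S hconjabs hs0big

/-- Robust absence of a dominated splitting of index `j`.  Here `r` enumerates the
eigenvalues of `A ∈ GL(d,ℝ)` in increasing modulus (with multiplicity, `0`-based, so the
paper's `λ_j, λ_{j+1}` are `r ⟨j-1⟩, r ⟨j⟩`).  Assume
`χ_{j-1}(A) < χ_j(A) = χ_{j+1}(A) < χ_{j+2}(A)` and that `λ_j, λ_{j+1}` form a pair of
non-real complex conjugate eigenvalues.  Then no `A'` close to `A` admits an invariant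
splitting `E ⊕ F` with `dim E = j` dominated for some power `k ≥ 1`. -/
theorem complex_pair_robust_nondomination {d : ℕ} (A : Vd d ≃L[ℝ] Vd d)
    (r : Fin d → ℂ)
    (hr : specC (A : Vd d →L[ℝ] Vd d) = Multiset.map r Finset.univ.val)
    (hmono : Monotone fun m : Fin d => ‖r m‖)
    (j : ℕ) (hj1 : 1 ≤ j) (hjd : j < d)
    (hlow : ∀ m : Fin d, (m : ℕ) < j - 1 →
      ‖r m‖ < ‖r ⟨j - 1, by omega⟩‖)
    (hhigh : ∀ m : Fin d, j < (m : ℕ) →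
      ‖r ⟨j, hjd⟩‖ < ‖r m‖)
    (heq : ‖r ⟨j - 1, by omega⟩‖ = ‖r ⟨j, hjd⟩‖)
    (hconj : r ⟨j, hjd⟩ = (starRingEnd ℂ) (r ⟨j - 1, by omega⟩))
    (him : (r ⟨j - 1, by omega⟩).im ≠ 0) :
    ∃ δ > 0, ∀ A' : Vd d →L[ℝ] Vd d,
      ‖(A : Vd d →L[ℝ] Vd d) - A'‖ < δ →
      ¬ ∃ (E F : Submodule ℝ (Vd d)) (k : ℕ),
        1 ≤ k ∧ IsCompl E F ∧ Module.finrank ℝ E = j ∧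
        (∀ v ∈ E, A' v ∈ E) ∧ (∀ v ∈ F, A' v ∈ F) ∧
        ∀ u ∈ E, ∀ w ∈ F, ‖u‖ = 1 → ‖w‖ = 1 →
          ‖(A' ^ k) u‖ ≤ (1 / 2) * ‖(A' ^ k) w‖ := by
  classical
  by_contra hcon
  push_neg at hcon
  set Acl : Vd d →L[ℝ] Vd d := (A : Vd d →L[ℝ] Vd d) with hAcl
  -- evaluation of the charpoly of A
  have hAeval : ∀ t : ℂ, ((LinearMap.charpoly ((Acl : Vd d →ₗ[ℝ] Vd d))).map
      (algebraMap ℝ ℂ)).eval t = ∏ m, (t - r m) := by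
    intro t
    set P := (LinearMap.charpoly ((Acl : Vd d →ₗ[ℝ] Vd d))).map (algebraMap ℝ ℂ) with hP
    have hPm : P.Monic := (LinearMap.charpoly_monic _).map _
    have hprod := (IsAlgClosed.splits P).eq_prod_roots_of_monic hPm
    have hroots : P.roots = Multiset.map r Finset.univ.val := hr
    rw [hprod, hroots]
    exact eval_prod_fn r t
  -- extract a sequence of counterexamples
  have hseq : ∀ n : ℕ, ∃ A' : Vd d →L[ℝ] Vd d, ‖Acl - A'‖ < 1 / ((n : ℝ) + 1) ∧
      ∃ (E F : Submodule ℝ (Vd d)) (k : ℕ),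
        1 ≤ k ∧ IsCompl E F ∧ Module.finrank ℝ E = j ∧
        (∀ v ∈ E, A' v ∈ E) ∧ (∀ v ∈ F, A' v ∈ F) ∧
        ∀ u ∈ E, ∀ w ∈ F, ‖u‖ = 1 → ‖w‖ = 1 →
          ‖(A' ^ k) u‖ ≤ (1 / 2) * ‖(A' ^ k) w‖ := by
    intro n
    have hpos : (0 : ℝ) < 1 / ((n : ℝ) + 1) := by positivity
    exact hcon (1 / ((n : ℝ) + 1)) hpos
  choose B hBdist hBpack using hseq
  have hpack : ∀ n : ℕ, ∃ (a : Fin j → ℂ) (b : Fin (d - j) → ℂ),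
      (∀ t : ℂ, (∏ i, (t - a i)) * (∏ i, (t - b i))
        = ((LinearMap.charpoly ((B n : Vd d →ₗ[ℝ] Vd d))).map (algebraMap ℝ ℂ)).eval t) ∧
      (∀ i i', ‖a i‖ ≤ ‖b i'‖) ∧
      (∀ t, (∏ i, ((starRingEnd ℂ) t - a i)) = (starRingEnd ℂ) (∏ i, (t - a i))) ∧
      (∀ i, ‖a i‖ ≤ ‖B n‖) ∧ (∀ i', ‖b i'‖ ≤ ‖B n‖) := by
    intro n
    obtain ⟨E, F, k, hk, hc, hdim, hE, hF, hdom⟩ := hBpack n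
    exact splitting_package (le_of_lt hjd) (B n) E F k hk hc hdim hE hF hdom
  choose a b hG1 hG2 hG3 hG4a hG4b using hpack
  -- uniform bounds
  have hC0 : (0 : ℝ) ≤ ‖Acl‖ + 1 := by positivity
  have hBnorm : ∀ n, ‖B n‖ ≤ ‖Acl‖ + 1 := by
    intro n
    have h1 := hBdist n
    have h2 : ‖B n‖ ≤ ‖Acl‖ + ‖Acl - B n‖ := by
      calc ‖B n‖ = ‖Acl - (Acl - B n)‖ := by rw [sub_sub_cancel]
        _ ≤ ‖Acl‖ + ‖Acl - B n‖ := norm_sub_le _ _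
    have h3 : 1 / ((n : ℝ) + 1) ≤ 1 := by
      rw [div_le_one (by positivity)]
      have : (0 : ℝ) ≤ (n : ℝ) := Nat.cast_nonneg n
      linarith
    linarith
  -- Bolzano-Weierstrass
  set u : ℕ → (Fin j → ℂ) × (Fin (d - j) → ℂ) := fun n => (a n, b n) with hu
  have humem : ∀ n, u n ∈ Metric.closedBall (0 : (Fin j → ℂ) × (Fin (d - j) → ℂ)) (‖Acl‖ + 1) := by
    intro n
    rw [Metric.mem_closedBall, dist_zero_right, Prod.norm_def]
    apply max_le
    · rw [pi_norm_le_iff_of_nonneg hC0]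
      intro i
      exact (hG4a n i).trans (hBnorm n)
    · rw [pi_norm_le_iff_of_nonneg hC0]
      intro i
      exact (hG4b n i).trans (hBnorm n)
  obtain ⟨L, _, φ, hφmono, hφtend⟩ :=
    tendsto_subseq_of_bounded Metric.isBounded_closedBall humem
  set αl : Fin j → ℂ := L.1 with hαl
  set βl : Fin (d - j) → ℂ := L.2 with hβl
  have hαtend : ∀ i, Tendsto (fun n => a (φ n) i) atTop (nhds (αl i)) := by
    intro i
    have hcont : Continuous (fun p : (Fin j → ℂ) × (Fin (d - j) → ℂ) => p.1 i) :=
      (continuous_apply i).comp continuous_fst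
    exact (hcont.tendsto L).comp hφtend
  have hβtend : ∀ i, Tendsto (fun n => b (φ n) i) atTop (nhds (βl i)) := by
    intro i
    have hcont : Continuous (fun p : (Fin j → ℂ) × (Fin (d - j) → ℂ) => p.2 i) :=
      (continuous_apply i).comp continuous_snd
    exact (hcont.tendsto L).comp hφtend
  -- B tends to A
  have hAtend : Tendsto (fun n => ‖Acl - B n‖) atTop (nhds 0) := by
    apply squeeze_zero (fun n => norm_nonneg _) (fun n => le_of_lt (hBdist n))
    exact tendsto_one_div_add_atTop_nhds_zero_nat
  have hAφ : Tendsto (fun n => ‖Acl - B (φ n)‖) atTop (nhds 0) :=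
    hAtend.comp hφmono.tendsto_atTop
  -- limit versions of the three key facts
  have hprodαtend : ∀ t : ℂ, Tendsto (fun n => ∏ i, (t - a (φ n) i)) atTop
      (nhds (∏ i, (t - αl i))) := by
    intro t
    apply tendsto_finset_prod
    intro i _
    exact tendsto_const_nhds.sub (hαtend i)
  have hprodβtend : ∀ t : ℂ, Tendsto (fun n => ∏ i, (t - b (φ n) i)) atTop
      (nhds (∏ i, (t - βl i))) := by
    intro t
    apply tendsto_finset_prod
    intro i _
    exact tendsto_const_nhds.sub (hβtend i)
  have key1 : ∀ t : ℂ, (∏ i, (t - αl i)) * (∏ i, (t - βl i)) = ∏ m, (t - r m) := by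
    intro t
    have hL : Tendsto (fun n => (∏ i, (t - a (φ n) i)) * (∏ i, (t - b (φ n) i))) atTop
        (nhds ((∏ i, (t - αl i)) * (∏ i, (t - βl i)))) :=
      (hprodαtend t).mul (hprodβtend t)
    have hR0 := charpoly_eval_tendsto Acl (fun n => B (φ n)) hAφ t
    have hReq : (fun n => ((LinearMap.charpoly ((B (φ n) : Vd d →ₗ[ℝ] Vd d))).map
        (algebraMap ℝ ℂ)).eval t)
        = fun n => (∏ i, (t - a (φ n) i)) * (∏ i, (t - b (φ n) i)) := by
      funext n
      exact (hG1 (φ n) t).symm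
    rw [hReq] at hR0
    have := tendsto_nhds_unique hL hR0
    rw [this, hAeval t]
  have key2 : ∀ i i', ‖αl i‖ ≤ ‖βl i'‖ := by
    intro i i'
    have h1 : Tendsto (fun n => ‖a (φ n) i‖) atTop (nhds (‖αl i‖)) :=
      (continuous_norm.tendsto _).comp (hαtend i)
    have h2 : Tendsto (fun n => ‖b (φ n) i'‖) atTop (nhds (‖βl i'‖)) :=
      (continuous_norm.tendsto _).comp (hβtend i')
    exact le_of_tendsto_of_tendsto' h1 h2 (fun n => hG2 (φ n) i i')
  have key3 : ∀ t : ℂ, (∏ i, ((starRingEnd ℂ) t - αl i))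
      = (starRingEnd ℂ) (∏ i, (t - αl i)) := by
    intro t
    have h1 := hprodαtend ((starRingEnd ℂ) t)
    have h2 : Tendsto (fun n => (starRingEnd ℂ) (∏ i, (t - a (φ n) i))) atTop
        (nhds ((starRingEnd ℂ) (∏ i, (t - αl i)))) :=
      ((continuous_star).tendsto _).comp (hprodαtend t)
    have hfun : (fun n => ∏ i, ((starRingEnd ℂ) t - a (φ n) i))
        = fun n => (starRingEnd ℂ) (∏ i, (t - a (φ n) i)) := by
      funext n
      exact hG3 (φ n) t
    rw [hfun] at h1
    exact tendsto_nhds_unique h1 h2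
  exact multiset_finale r j hj1 hjd hlow hhigh heq hconj him αl βl key1 key2 key3
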